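/- Let d ≥ 1, k ≥ 1, η_1, …, η_k > 0 and T_1, …, T_k > 0. Set η = ∑_{j=1}^k η_j and T_∞ = (1/η) ∑_{j=1}^k η_j T_j. Define g : ℝ^d → ℝ by g(v) = (1 + η)^{−1} ( m_{T_∞}(v) + ∑_{j=1}^k η_j m_{T_j}(v) ). Then: (i) g is a probability density on ℝ^d; (ii) its temperature T_g := (1/d) ∫_{ℝ^d} |v|² g(v) dv equals T_∞; and (iii) g satisfies the self-consistent steady-state equation [ m_{T_g}(v) − g(v) ] + ∑_{j=1}^k η_j [ m_{T_j}(v) − g(v) ] = 0 for every v ∈ ℝ^d. -/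

import Mathlib

open MeasureTheory Real Set

lemma oneD_sq_moment {b : ℝ} (hb : 0 < b) :
    ∫ x : ℝ, x ^ 2 * Real.exp (-b * x ^ 2) = (1 / (2 * b)) * Real.sqrt (π / b) := by
  have hIoi : ∫ x in Ioi (0:ℝ), x ^ 2 * Real.exp (-b * x ^ 2)
      = (1/2) * ((1 / b) ^ ((3:ℝ)/2) * Real.Gamma (3/2)) := by
    have key := MeasureTheory.integral_comp_rpow_Ioi
      (fun y : ℝ => y ^ ((1:ℝ)/2) * Real.exp (-(b * y))) (p := 2) two_ne_zero
    have hG := Real.integral_rpow_mul_exp_neg_mul_Ioi (by norm_num : (0:ℝ) < 3/2) hb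
    have hGeq : ∫ y in Ioi (0:ℝ), y ^ ((1:ℝ)/2) * Real.exp (-(b * y))
        = (1 / b) ^ ((3:ℝ)/2) * Real.Gamma (3/2) := by
      rw [← hG]; norm_num
    have hL : ∫ x in Ioi (0:ℝ), (|(2:ℝ)| * x ^ ((2:ℝ) - 1)) •
        ((fun y : ℝ => y ^ ((1:ℝ)/2) * Real.exp (-(b * y))) (x ^ (2:ℝ)))
        = ∫ x in Ioi (0:ℝ), 2 * (x ^ 2 * Real.exp (-b * x ^ 2)) := by
      refine setIntegral_congr_fun measurableSet_Ioi (fun x hx => ?_)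
      have hx0 : 0 < x := hx
      have h1 : x ^ ((2:ℝ) - 1) = x := by norm_num
      have h2 : x ^ ((2:ℝ)) = x ^ 2 := by
        rw [show ((2:ℝ)) = ((2:ℕ):ℝ) by norm_num, Real.rpow_natCast]
      have h3 : (x ^ 2 : ℝ) ^ ((1:ℝ)/2) = x := by
        rw [← Real.rpow_natCast x 2, ← Real.rpow_mul hx0.le]
        norm_num [Real.rpow_one]
      simp only [smul_eq_mul, h1, h2, h3, abs_two]
      ring_nf
    rw [hL] at key
    rw [hGeq] at key
    rw [integral_const_mul] at key
    linarith
  have habs : ∫ x : ℝ, x ^ 2 * Real.exp (-b * x ^ 2)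
      = 2 * ∫ x in Ioi (0:ℝ), x ^ 2 * Real.exp (-b * x ^ 2) := by
    rw [← integral_comp_abs (f := fun y : ℝ => y ^ 2 * Real.exp (-b * y ^ 2))]
    congr 1 with x
    simp [sq_abs]
  have hGamma : Real.Gamma (3/2) = (1/2) * Real.sqrt π := by
    have : ((3:ℝ)/2) = (1/2) + 1 := by norm_num
    rw [this, Real.Gamma_add_one (by norm_num), Real.Gamma_one_half_eq]
  rw [habs, hIoi, hGamma]
  have h1b : (1 / b : ℝ) ^ ((3:ℝ)/2) = (1/b) * (1/b) ^ ((1:ℝ)/2) := by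
    rw [show ((3:ℝ)/2) = 1 + 1/2 by norm_num, Real.rpow_add (by positivity), Real.rpow_one]
  have hsqrt : Real.sqrt (π / b) = Real.sqrt π * (1/b) ^ ((1:ℝ)/2) := by
    rw [show (π / b) = π * (1/b) by ring, Real.sqrt_mul pi_pos.le, Real.sqrt_eq_rpow, Real.sqrt_eq_rpow]
  rw [h1b, hsqrt]
  ring

lemma oneD_sq_integrable {b : ℝ} (hb : 0 < b) :
    Integrable (fun x : ℝ => x ^ 2 * Real.exp (-b * x ^ 2)) := by
  have h := integrable_rpow_mul_exp_neg_mul_sq hb (by norm_num : (-1:ℝ) < 2)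
  have h2 : ∀ x : ℝ, x ^ (2:ℝ) = x ^ 2 := fun x => by
    rw [show (2:ℝ) = ((2:ℕ):ℝ) by norm_num, Real.rpow_natCast]
  simp only [h2] at h
  exact h

lemma pi_sq_moment {d : ℕ} {b : ℝ} (hb : 0 < b) :
    ∫ x : Fin d → ℝ, (∑ i, (x i) ^ 2) * ∏ j, Real.exp (-b * (x j) ^ 2)
      = d * ((1 / (2 * b)) * Real.sqrt (π / b) * Real.sqrt (π / b) ^ (d - 1)) := by
  set f : Fin d → Fin d → ℝ → ℝ :=
    fun i j y => (if j = i then y ^ 2 else 1) * Real.exp (-b * y ^ 2) with hf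
  have hint : ∀ i j, Integrable (f i j) := by
    intro i j
    by_cases h : j = i
    · simpa [hf, h] using oneD_sq_integrable hb
    · simpa [hf, h] using integrable_exp_neg_mul_sq hb
  have hF : ∀ i, Integrable (fun x : Fin d → ℝ => ∏ j, f i j (x j)) :=
    fun i => Integrable.fintype_prod (hint i)
  have hpt : ∀ x : Fin d → ℝ,
      (∑ i, (x i) ^ 2) * ∏ j, Real.exp (-b * (x j) ^ 2)
        = ∑ i, ∏ j, f i j (x j) := by
    intro x
    rw [Finset.sum_mul]
    refine Finset.sum_congr rfl (fun i _ => ?_)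
    rw [hf]
    simp only []
    rw [Finset.prod_mul_distrib, Finset.prod_ite_eq' Finset.univ i (fun j => (x j) ^ 2)]
    simp
  have h1 : ∫ x : Fin d → ℝ, (∑ i, (x i) ^ 2) * ∏ j, Real.exp (-b * (x j) ^ 2)
      = ∑ i, ∫ x : Fin d → ℝ, ∏ j, f i j (x j) := by
    rw [show (fun x : Fin d → ℝ => (∑ i, (x i) ^ 2) * ∏ j, Real.exp (-b * (x j) ^ 2))
        = fun x => ∑ i, ∏ j, f i j (x j) from funext hpt]
    exact integral_finset_sum _ (fun i _ => hF i)
  rw [h1]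
  have h2 : ∀ i : Fin d, ∫ x : Fin d → ℝ, ∏ j, f i j (x j)
      = (1 / (2 * b)) * Real.sqrt (π / b) * Real.sqrt (π / b) ^ (d - 1) := by
    intro i
    rw [integral_fintype_prod_volume_eq_prod (f i)]
    have hji : ∀ j : Fin d, ∫ y : ℝ, f i j y =
        if j = i then (1 / (2 * b)) * Real.sqrt (π / b) else Real.sqrt (π / b) := by
      intro j
      by_cases h : j = i
      · simp only [hf, h, if_pos rfl]
        exact oneD_sq_moment hb
      · simp only [hf, if_neg h, one_mul]
        exact integral_gaussian b
    simp only [hji]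
    rw [← Finset.mul_prod_erase Finset.univ _ (Finset.mem_univ i), if_pos rfl]
    rw [Finset.prod_congr rfl (fun j hj => if_neg (Finset.ne_of_mem_erase hj)),
      Finset.prod_const, Finset.card_erase_of_mem (Finset.mem_univ i), Finset.card_univ,
      Fintype.card_fin]
  simp only [h2, Finset.sum_const, Finset.card_univ, Fintype.card_fin, nsmul_eq_mul]

lemma euclid_norm_symm {d : ℕ} (x : Fin d → ℝ) :
    ‖((MeasurableEquiv.toLp 2 (Fin d → ℝ)).symm).symm x‖ ^ 2 = ∑ i, (x i) ^ 2 := by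
  rw [EuclideanSpace.norm_eq, Real.sq_sqrt (by positivity)]
  simp [sq_abs]

lemma euclid_exp_integrable {d : ℕ} {b : ℝ} (hb : 0 < b) :
    Integrable (fun v : EuclideanSpace ℝ (Fin d) => Real.exp (-b * ‖v‖ ^ 2)) := by
  have e := EuclideanSpace.volume_preserving_symm_measurableEquiv_toLp (Fin d)
  rw [← MeasurePreserving.integrable_comp_emb e.symm (MeasurableEquiv.measurableEmbedding _)]
  have : (fun v : EuclideanSpace ℝ (Fin d) => Real.exp (-b * ‖v‖ ^ 2)) ∘
      ((MeasurableEquiv.toLp 2 (Fin d → ℝ)).symm).symm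
      = fun x : Fin d → ℝ => ∏ j, Real.exp (-b * (x j) ^ 2) := by
    funext x
    simp only [Function.comp_apply, euclid_norm_symm, ← Real.exp_sum, Finset.mul_sum, neg_mul,
      Finset.sum_neg_distrib]
  rw [this]
  exact Integrable.fintype_prod (fun _ => integrable_exp_neg_mul_sq hb)

lemma euclid_sq_integrable {d : ℕ} {b : ℝ} (hb : 0 < b) :
    Integrable (fun v : EuclideanSpace ℝ (Fin d) => ‖v‖ ^ 2 * Real.exp (-b * ‖v‖ ^ 2)) := by
  have e := EuclideanSpace.volume_preserving_symm_measurableEquiv_toLp (Fin d)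
  rw [← MeasurePreserving.integrable_comp_emb e.symm (MeasurableEquiv.measurableEmbedding _)]
  set f : Fin d → Fin d → ℝ → ℝ :=
    fun i j y => (if j = i then y ^ 2 else 1) * Real.exp (-b * y ^ 2) with hf
  have hint : ∀ i j, Integrable (f i j) := by
    intro i j
    by_cases h : j = i
    · simpa [hf, h] using oneD_sq_integrable hb
    · simpa [hf, h] using integrable_exp_neg_mul_sq hb
  have : (fun v : EuclideanSpace ℝ (Fin d) => ‖v‖ ^ 2 * Real.exp (-b * ‖v‖ ^ 2)) ∘
      ((MeasurableEquiv.toLp 2 (Fin d → ℝ)).symm).symm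
      = fun x : Fin d → ℝ => ∑ i, ∏ j, f i j (x j) := by
    funext x
    simp only [Function.comp_apply, euclid_norm_symm]
    rw [show Real.exp (-b * ∑ i, (x i) ^ 2) = ∏ j, Real.exp (-b * (x j) ^ 2) by
      rw [← Real.exp_sum]; congr 1; rw [Finset.mul_sum]]
    rw [Finset.sum_mul]
    refine Finset.sum_congr rfl (fun i _ => ?_)
    rw [hf]
    simp only []
    rw [Finset.prod_mul_distrib, Finset.prod_ite_eq' Finset.univ i (fun j => (x j) ^ 2)]
    simp
  rw [this]
  exact integrable_finset_sum _ (fun i _ => Integrable.fintype_prod (hint i))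

lemma euclid_exp_integral {d : ℕ} {b : ℝ} (hb : 0 < b) :
    ∫ v : EuclideanSpace ℝ (Fin d), Real.exp (-b * ‖v‖ ^ 2) = (π / b) ^ ((d : ℝ) / 2) := by
  rw [GaussianFourier.integral_rexp_neg_mul_sq_norm hb]
  norm_num [finrank_euclideanSpace_fin]

lemma euclid_sq_integral {d : ℕ} (hd : 1 ≤ d) {b : ℝ} (hb : 0 < b) :
    ∫ v : EuclideanSpace ℝ (Fin d), ‖v‖ ^ 2 * Real.exp (-b * ‖v‖ ^ 2)
      = ((d : ℝ) / (2 * b)) * (π / b) ^ ((d : ℝ) / 2) := by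
  have e := EuclideanSpace.volume_preserving_symm_measurableEquiv_toLp (Fin d)
  rw [← MeasurePreserving.integral_comp' e.symm]
  have : (fun x : Fin d → ℝ =>
      (fun v : EuclideanSpace ℝ (Fin d) => ‖v‖ ^ 2 * Real.exp (-b * ‖v‖ ^ 2))
        (((MeasurableEquiv.toLp 2 (Fin d → ℝ)).symm).symm x))
      = fun x : Fin d → ℝ => (∑ i, (x i) ^ 2) * ∏ j, Real.exp (-b * (x j) ^ 2) := by
    funext x
    simp only [euclid_norm_symm]
    congr 1
    rw [← Real.exp_sum]; congr 1; rw [Finset.mul_sum]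
  rw [show (∫ x : Fin d → ℝ, (fun v : EuclideanSpace ℝ (Fin d) => ‖v‖ ^ 2 *
      Real.exp (-b * ‖v‖ ^ 2)) (((MeasurableEquiv.toLp 2 (Fin d → ℝ)).symm).symm x))
      = ∫ x : Fin d → ℝ, (∑ i, (x i) ^ 2) * ∏ j, Real.exp (-b * (x j) ^ 2) by rw [this]]
  rw [pi_sq_moment hb]
  have hc : Real.sqrt (π / b) = (π / b) ^ ((1:ℝ)/2) := Real.sqrt_eq_rpow _
  have hpow : Real.sqrt (π / b) * Real.sqrt (π / b) ^ (d - 1) = (π / b) ^ ((d : ℝ) / 2) := by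
    have : Real.sqrt (π / b) * Real.sqrt (π / b) ^ (d - 1) = Real.sqrt (π / b) ^ d := by
      conv_rhs => rw [show d = (d - 1) + 1 from (Nat.succ_pred_eq_of_pos hd).symm]
      rw [pow_succ]
      ring
    rw [this, hc, ← Real.rpow_natCast ((π / b) ^ ((1:ℝ)/2)) d, ← Real.rpow_mul (by positivity)]
    congr 1
    ring
  calc (d : ℝ) * (1 / (2 * b) * Real.sqrt (π / b) * Real.sqrt (π / b) ^ (d - 1))
      = (d : ℝ) / (2 * b) * (Real.sqrt (π / b) * Real.sqrt (π / b) ^ (d - 1)) := by ring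
    _ = ((d : ℝ) / (2 * b)) * (π / b) ^ ((d : ℝ) / 2) := by rw [hpow]


/-- The centered Maxwellian (Gaussian) probability density at temperature `T` on `ℝᵈ`. -/
noncomputable def maxwellian (d : ℕ) (T : ℝ) (v : EuclideanSpace ℝ (Fin d)) : ℝ :=
  (2 * Real.pi * T) ^ (-(d : ℝ) / 2) * Real.exp (-‖v‖ ^ 2 / (2 * T))

/-- Lemma 2.1: the unique spatially homogeneous steady state of the thermostatted
BGK equation (with `α = 1`) is the explicit mixture of Maxwellians
`g = (1 + η)⁻¹ (m_{T∞} + ∑ⱼ ηⱼ m_{Tⱼ})`; it is a probability density, its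
temperature is `T∞`, and it satisfies the self-consistent steady state equation. -/

lemma maxwellian_eq {d : ℕ} {T : ℝ} (hT : 0 < T) (v : EuclideanSpace ℝ (Fin d)) :
    maxwellian d T v = (2 * π * T) ^ (-(d : ℝ) / 2) * Real.exp (-(2 * T)⁻¹ * ‖v‖ ^ 2) := by
  unfold maxwellian
  congr 2
  field_simp

lemma maxwellian_integrable {d : ℕ} {T : ℝ} (hT : 0 < T) :
    Integrable (maxwellian d T) := by
  have hb : 0 < (2 * T)⁻¹ := by positivity
  have := (euclid_exp_integrable (d := d) hb).const_mul ((2 * π * T) ^ (-(d : ℝ) / 2))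
  exact this.congr (ae_of_all _ fun v => (maxwellian_eq hT v).symm)

lemma pi_div_inv {T : ℝ} (hT : 0 < T) : π / (2 * T)⁻¹ = 2 * π * T := by
  field_simp

lemma integral_maxwellian {d : ℕ} {T : ℝ} (hT : 0 < T) :
    ∫ v : EuclideanSpace ℝ (Fin d), maxwellian d T v = 1 := by
  have hb : 0 < (2 * T)⁻¹ := by positivity
  simp_rw [maxwellian_eq hT]
  rw [integral_const_mul, euclid_exp_integral hb, pi_div_inv hT,
    ← Real.rpow_add (by positivity), show -(d:ℝ)/2 + (d:ℝ)/2 = 0 by ring, Real.rpow_zero]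

lemma sq_maxwellian_integrable {d : ℕ} {T : ℝ} (hT : 0 < T) :
    Integrable (fun v : EuclideanSpace ℝ (Fin d) => ‖v‖ ^ 2 * maxwellian d T v) := by
  have hb : 0 < (2 * T)⁻¹ := by positivity
  have := (euclid_sq_integrable (d := d) hb).const_mul ((2 * π * T) ^ (-(d : ℝ) / 2))
  refine this.congr (ae_of_all _ fun v => ?_)
  simp only [maxwellian_eq hT]
  ring

lemma integral_sq_maxwellian {d : ℕ} (hd : 1 ≤ d) {T : ℝ} (hT : 0 < T) :
    ∫ v : EuclideanSpace ℝ (Fin d), ‖v‖ ^ 2 * maxwellian d T v = d * T := by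
  have hb : 0 < (2 * T)⁻¹ := by positivity
  have heq : (fun v : EuclideanSpace ℝ (Fin d) => ‖v‖ ^ 2 * maxwellian d T v)
      = fun v => (2 * π * T) ^ (-(d : ℝ) / 2) * (‖v‖ ^ 2 * Real.exp (-(2 * T)⁻¹ * ‖v‖ ^ 2)) := by
    funext v; rw [maxwellian_eq hT]; ring
  rw [heq, integral_const_mul, euclid_sq_integral hd hb, pi_div_inv hT]
  have h2b : (d : ℝ) / (2 * (2 * T)⁻¹) = d * T := by
    field_simp
  rw [h2b, ← mul_assoc, mul_comm ((2 * π * T) ^ (-(d : ℝ) / 2)) ((d : ℝ) * T), mul_assoc,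
    ← Real.rpow_add (by positivity), show -(d:ℝ)/2 + (d:ℝ)/2 = 0 by ring, Real.rpow_zero,
    mul_one]

theorem bgk_homogeneous_steady_state
    (d : ℕ) (hd : 1 ≤ d)
    (k : ℕ) (hk : 1 ≤ k)
    (η : Fin k → ℝ) (hη : ∀ j, 0 < η j)
    (Tres : Fin k → ℝ) (hTres : ∀ j, 0 < Tres j)
    (ηtot : ℝ) (hηtot : ηtot = ∑ j, η j)
    (Tinf : ℝ) (hTinf : Tinf = (1 / ηtot) * ∑ j, η j * Tres j)
    (g : EuclideanSpace ℝ (Fin d) → ℝ)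
    (hg : ∀ v, g v = (1 + ηtot)⁻¹ *
      (maxwellian d Tinf v + ∑ j, η j * maxwellian d (Tres j) v))
    (Tg : ℝ) (hTg : Tg = (1 / (d : ℝ)) * ∫ v : EuclideanSpace ℝ (Fin d), ‖v‖ ^ 2 * g v) :
    (∫ v : EuclideanSpace ℝ (Fin d), g v) = 1 ∧
    Tg = Tinf ∧
    (∀ v : EuclideanSpace ℝ (Fin d),
      (maxwellian d Tg v - g v) + ∑ j, η j * (maxwellian d (Tres j) v - g v) = 0) := by
  haveI : Nonempty (Fin k) := Fin.pos_iff_nonempty.mp hk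
  have hηpos : 0 < ηtot := by
    rw [hηtot]
    exact Finset.sum_pos (fun j _ => hη j) Finset.univ_nonempty
  have hTinfpos : 0 < Tinf := by
    rw [hTinf]
    have : 0 < ∑ j, η j * Tres j :=
      Finset.sum_pos (fun j _ => mul_pos (hη j) (hTres j)) Finset.univ_nonempty
    positivity
  have h1η : (0:ℝ) < 1 + ηtot := by linarith
  have hdpos : (0:ℝ) < (d : ℝ) := by exact_mod_cast hd
  -- sum identity
  have hsum : ∑ j, η j * Tres j = ηtot * Tinf := by
    rw [hTinf]
    field_simp
  -- part (i)
  have hi : (∫ v : EuclideanSpace ℝ (Fin d), g v) = 1 := by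
    have hgf : g = fun v => (1 + ηtot)⁻¹ *
        (maxwellian d Tinf v + ∑ j, η j * maxwellian d (Tres j) v) := funext hg
    rw [hgf, integral_const_mul, integral_add (maxwellian_integrable hTinfpos)
      (integrable_finset_sum _ (fun j _ => (maxwellian_integrable (hTres j)).const_mul (η j))),
      integral_maxwellian hTinfpos,
      integral_finset_sum _ (fun j _ => (maxwellian_integrable (hTres j)).const_mul (η j))]
    simp_rw [integral_const_mul, integral_maxwellian (hTres _)]
    simp only [mul_one]
    rw [← hηtot]
    field_simp
  -- second moment of g
  have hii : (∫ v : EuclideanSpace ℝ (Fin d), ‖v‖ ^ 2 * g v) = d * Tinf := by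
    have hgf : (fun v : EuclideanSpace ℝ (Fin d) => ‖v‖ ^ 2 * g v)
        = fun v => (1 + ηtot)⁻¹ * (‖v‖ ^ 2 * maxwellian d Tinf v
          + ∑ j, η j * (‖v‖ ^ 2 * maxwellian d (Tres j) v)) := by
      funext v
      have hs : ∑ j, η j * (‖v‖ ^ 2 * maxwellian d (Tres j) v)
          = ‖v‖ ^ 2 * ∑ j, η j * maxwellian d (Tres j) v := by
        rw [Finset.mul_sum]
        exact Finset.sum_congr rfl (fun j _ => by ring)
      rw [hg v, hs]
      ring
    rw [hgf, integral_const_mul, integral_add (sq_maxwellian_integrable hTinfpos)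
      (integrable_finset_sum _ (fun j _ => (sq_maxwellian_integrable (hTres j)).const_mul (η j))),
      integral_sq_maxwellian hd hTinfpos,
      integral_finset_sum _ (fun j _ => (sq_maxwellian_integrable (hTres j)).const_mul (η j))]
    simp_rw [integral_const_mul, integral_sq_maxwellian hd (hTres _)]
    have : ∑ j, η j * ((d : ℝ) * Tres j) = (d : ℝ) * (ηtot * Tinf) := by
      rw [← hsum, Finset.mul_sum]
      exact Finset.sum_congr rfl (fun j _ => by ring)
    rw [this]
    field_simp
  have hTgTinf : Tg = Tinf := by
    rw [hTg, hii]
    field_simp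
  refine ⟨hi, hTgTinf, fun v => ?_⟩
  rw [hTgTinf]
  have hgv := hg v
  have hmul : (1 + ηtot) * g v
      = maxwellian d Tinf v + ∑ j, η j * maxwellian d (Tres j) v := by
    rw [hgv, ← mul_assoc, mul_inv_cancel₀ (ne_of_gt h1η), one_mul]
  have hexp : ∑ j, η j * (maxwellian d (Tres j) v - g v)
      = (∑ j, η j * maxwellian d (Tres j) v) - ηtot * g v := by
    rw [hηtot, Finset.sum_mul, ← Finset.sum_sub_distrib]
    exact Finset.sum_congr rfl (fun j _ => by ring)
  rw [hexp]
  nlinarith [hmul]
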